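/- Let X = {0,1,2} with the absolute-value metric and T : X → X defined by T0 = 1, T1 = 0, T2 = 1. Then for all pairwise distinct x,y,z ∈ X, P(Tx,Ty,Tz) ≤ (3/4)·P(x,y,z), but T has no fixed point. -/
import Mathlib

lemma mem_cases (x : ({0,1,2} : Set ℝ)) :
    x = ⟨0, by norm_num⟩ ∨ x = ⟨1, by norm_num⟩ ∨ x = ⟨2, by norm_num⟩ := by
  obtain ⟨v, hv⟩ := x
  simp only [Set.mem_insert_iff, Set.mem_singleton_iff] at hv
  rcases hv with h | h | h <;> subst h
  · left; rfl
  · right; left; rfl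
  · right; right; rfl

theorem stmt_2 (T : ({0,1,2} : Set ℝ) → ({0,1,2} : Set ℝ))
    (hT0 : (T ⟨0, by norm_num⟩ : ℝ) = 1)
    (hT1 : (T ⟨1, by norm_num⟩ : ℝ) = 0)
    (hT2 : (T ⟨2, by norm_num⟩ : ℝ) = 1) :
    (∀ x y z : ({0,1,2} : Set ℝ), x ≠ y → y ≠ z → x ≠ z →
      dist (T x) (T y) + dist (T y) (T z) + dist (T x) (T z) ≤
        (3/4) * (dist x y + dist y z + dist x z)) ∧
    ¬ ∃ x : ({0,1,2} : Set ℝ), T x = x := by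
  constructor
  · intro x y z hxy hyz hxz
    rcases mem_cases x with hx | hx | hx <;>
    rcases mem_cases y with hy | hy | hy <;>
    rcases mem_cases z with hz | hz | hz <;>
    subst hx <;> subst hy <;> subst hz <;>
    first
      | exact absurd rfl hxy
      | exact absurd rfl hyz
      | exact absurd rfl hxz
      | (simp only [Subtype.dist_eq, hT0, hT1, hT2, Real.dist_eq]; norm_num)
  · rintro ⟨x, hx⟩
    have h := congrArg (Subtype.val) hx
    rcases mem_cases x with h0 | h0 | h0 <;> subst h0 <;>
      simp only [hT0, hT1, hT2] at h <;> norm_num at h
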